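/- For every permutation π ∈ S_n, aix φ(π) = pix π and des φ(π) = lec π. -/

import Mathlib

namespace PaperStats

/-- `des w` is the number of descents of the word `w` (0-indexed positions `i`
with `w(i) > w(i+1)`). -/
def des (w : List ℕ) : ℕ :=
  ((Finset.range (w.length - 1)).filter fun i => w.getD (i + 1) 0 < w.getD i 0).card

/-- `inv w` is the number of inversions of the word `w`: pairs of positions
`i < j` with `w(i) > w(j)`. -/
def inv (w : List ℕ) : ℕ :=
  ((Finset.range w.length ×ˢ Finset.range w.length).filter
    fun p => p.1 < p.2 ∧ w.getD p.2 0 < w.getD p.1 0).card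

/-- An inversion `(i,j)` of `w` is admissible if either `w(j) < w(j+1)`
(`j` is not the last position and is followed by an ascent), or there is a
position `k` strictly between `i` and `j` with `w(j) > w(k)`. -/
def IsAdmissible (w : List ℕ) (i j : ℕ) : Prop :=
  (j + 1 < w.length ∧ w.getD j 0 < w.getD (j + 1) 0) ∨
    ∃ k, i < k ∧ k < j ∧ w.getD k 0 < w.getD j 0

instance (w : List ℕ) (i j : ℕ) : Decidable (IsAdmissible w i j) :=
  decidable_of_iff ((j + 1 < w.length ∧ w.getD j 0 < w.getD (j + 1) 0) ∨
      ∃ k ∈ Finset.Ioo i j, w.getD k 0 < w.getD j 0) (by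
    unfold IsAdmissible
    simp only [Finset.mem_Ioo, and_assoc])

/-- `ai w` is the number of admissible inversions of `w`. -/
def ai (w : List ℕ) : ℕ :=
  ((Finset.range w.length ×ˢ Finset.range w.length).filter
    fun p => p.1 < p.2 ∧ w.getD p.2 0 < w.getD p.1 0 ∧ IsAdmissible w p.1 p.2).card

/-- `aid w = ai w + des w`. -/
def aid (w : List ℕ) : ℕ := ai w + des w

/-- The statistic `aix`, defined recursively: `aix ∅ = 0`; writing a nonempty
word as `π = α m β`, where `m` is the smallest letter and `α` is the maximal
prefix not containing `m`, one has `aix π = 1 + aix β` if `α = ∅`,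
`aix π = 0` if `β = ∅` (and `α ≠ ∅`), and `aix π = aix α` otherwise. -/
def aix : List ℕ → ℕ
  | [] => 0
  | x :: xs =>
    if (x :: xs).takeWhile (fun a => decide (a ≠ xs.foldr min x)) = [] then
      1 + aix (((x :: xs).dropWhile (fun a => decide (a ≠ xs.foldr min x))).tail)
    else if ((x :: xs).dropWhile (fun a => decide (a ≠ xs.foldr min x))).tail = [] then 0
    else aix ((x :: xs).takeWhile (fun a => decide (a ≠ xs.foldr min x)))
termination_by w => w.length
decreasing_by
  · have h1 := (List.dropWhile_sublist (l := x :: xs) (fun a => decide (a ≠ xs.foldr min x))).length_le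
    have h2 := List.length_tail (l := (x :: xs).dropWhile (fun a => decide (a ≠ xs.foldr min x)))
    simp only [List.length_cons, List.foldr_attach] at *
    omega
  · rename_i hα hβ
    simp only [List.foldr_attach] at *
    have h0 : ((x :: xs).takeWhile (fun a => decide (a ≠ xs.foldr min x))) ++
        ((x :: xs).dropWhile (fun a => decide (a ≠ xs.foldr min x))) = x :: xs :=
      List.takeWhile_append_dropWhile ..
    have h1 : ((x :: xs).dropWhile (fun a => decide (a ≠ xs.foldr min x))) ≠ [] := by
      intro h
      apply hβ
      rw [h]
      rfl
    have h2 := congrArg List.length h0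
    simp only [List.length_append, List.length_cons] at h2
    have h3 : 0 < ((x :: xs).dropWhile (fun a => decide (a ≠ xs.foldr min x))).length :=
      List.length_pos_iff.mpr h1
    simp only [List.length_cons]
    omega

/-- The map `f(k,τ)`: with `m` the smallest letter of `τ` together with `k`
(`k` not occurring in `τ`), and `τ = α m β` with `α` the maximal prefix of `τ`
avoiding `m`: `f(k,∅) = k`; `f(k,τ) = kτ` if `k = m`; and for `k > m`,
`f(k,τ) = f(k,β) m` if `α = ∅`, `f(k,τ) = k m α` if `β = ∅`, and
`f(k,τ) = f(k,α) m β` otherwise. -/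
def fkt (k : ℕ) : List ℕ → List ℕ
  | [] => [k]
  | x :: xs =>
    if k < xs.foldr min x then k :: x :: xs
    else if (x :: xs).takeWhile (fun a => decide (a ≠ xs.foldr min x)) = [] then
      fkt k (((x :: xs).dropWhile (fun a => decide (a ≠ xs.foldr min x))).tail) ++
        [xs.foldr min x]
    else if ((x :: xs).dropWhile (fun a => decide (a ≠ xs.foldr min x))).tail = [] then
      k :: xs.foldr min x :: ((x :: xs).takeWhile (fun a => decide (a ≠ xs.foldr min x)))
    else
      fkt k ((x :: xs).takeWhile (fun a => decide (a ≠ xs.foldr min x))) ++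
        xs.foldr min x :: ((x :: xs).dropWhile (fun a => decide (a ≠ xs.foldr min x))).tail
termination_by w => w.length
decreasing_by
  · have h1 := (List.dropWhile_sublist (l := x :: xs) (fun a => decide (a ≠ xs.foldr min x))).length_le
    have h2 := List.length_tail (l := (x :: xs).dropWhile (fun a => decide (a ≠ xs.foldr min x)))
    simp only [List.length_cons, List.foldr_attach] at *
    omega
  · rename_i hk hα hβ
    simp only [List.foldr_attach] at *
    have h0 : ((x :: xs).takeWhile (fun a => decide (a ≠ xs.foldr min x))) ++
        ((x :: xs).dropWhile (fun a => decide (a ≠ xs.foldr min x))) = x :: xs :=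
      List.takeWhile_append_dropWhile ..
    have h1 : ((x :: xs).dropWhile (fun a => decide (a ≠ xs.foldr min x))) ≠ [] := by
      intro h
      apply hβ
      rw [h]
      rfl
    have h2 := congrArg List.length h0
    simp only [List.length_append, List.length_cons] at h2
    have h3 : 0 < ((x :: xs).dropWhile (fun a => decide (a ≠ xs.foldr min x))).length :=
      List.length_pos_iff.mpr h1
    simp only [List.length_cons]
    omega

/-- `ini w` is the first letter of `w`. -/
def ini (w : List ℕ) : ℕ := w.headD 0

/-- The word of a permutation `π ∈ S_n`, namely `π(1) π(2) … π(n)`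
(with values in `{1, …, n}`). -/
def permList {n : ℕ} (π : Equiv.Perm (Fin n)) : List ℕ :=
  List.ofFn fun i => (π i : ℕ) + 1

/-- The bijection `φ`: `φ(π) = f(π(1), f(π(2), ⋯ f(π(n), ∅) ⋯ ))`. -/
def phiW (w : List ℕ) : List ℕ := w.foldr fkt []

/-- Helper: `decRun l` splits `l` into its maximal weakly decreasing prefix
and the rest. -/
def decRun : List ℕ → List ℕ × List ℕ
  | [] => ([], [])
  | [x] => ([x], [])
  | x :: y :: rest =>
    if y ≤ x then ((x :: (decRun (y :: rest)).1), (decRun (y :: rest)).2)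
    else ([x], y :: rest)

theorem decRun_append : ∀ l : List ℕ, (decRun l).1 ++ (decRun l).2 = l
  | [] => rfl
  | [x] => rfl
  | x :: y :: rest => by
    rw [decRun]
    split
    · simpa using decRun_append (y :: rest)
    · rfl

/-- Helper computing the hook factorization of a word from its reversal: the
rightmost hook of the word starts at its rightmost descent top, i.e. it is
obtained by extending the maximal weakly decreasing prefix of the reversed word
by one more letter; the process is repeated on what remains, and when no
letters usable for a hook remain the word left over is the increasing part
`π₀`. The result is `(π₀, [π₁, …, π_k])`. -/
def hookRev (r : List ℕ) : List ℕ × List (List ℕ) :=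
  match h : (decRun r).2 with
  | [] => (r.reverse, [])
  | z :: rest =>
    ((hookRev rest).1, (hookRev rest).2 ++ [z :: (decRun r).1.reverse])
termination_by r.length
decreasing_by
  have h2 := congrArg List.length (decRun_append r)
  rw [h] at h2
  simp only [List.length_append, List.length_cons] at h2
  omega

/-- The hook factorization `(π₀, [π₁, …, π_k])` of a word
`w = π₀ π₁ ⋯ π_k`, where `π₀` is increasing and each `π_i`, `i ≥ 1`, is a
hook. -/
def hookSplit (w : List ℕ) : List ℕ × List (List ℕ) := hookRev w.reverse

/-- `pix w` is the length of the initial increasing factor `π₀` in the hook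
factorization of `w`. -/
def pix (w : List ℕ) : ℕ := (hookSplit w).1.length

/-- `lec w` is the sum of the numbers of inversions of the hooks in the hook
factorization of `w`. -/
def lec (w : List ℕ) : ℕ := ((hookSplit w).2.map inv).sum

/-- A word `w(1) … w(r)` with `r ≥ 2` is a hook if
`w(1) > w(2) ≤ w(3) ≤ ⋯ ≤ w(r)`. -/
def IsHook (w : List ℕ) : Prop :=
  ∃ a b rest, w = a :: b :: rest ∧ b < a ∧ List.Chain' (· ≤ ·) (b :: rest)

/-- `w(i)` is a left-to-right maximum of `w` if `w(k) < w(i)` for all `k < i`. -/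
def IsLRMax (w : List ℕ) (i : ℕ) : Prop := ∀ k < i, w.getD k 0 < w.getD i 0

instance (w : List ℕ) (i : ℕ) : Decidable (IsLRMax w i) := by
  unfold IsLRMax; infer_instance

/-- `mix w` counts the pairs of positions `i < j` such that either
`w(i) > w(j)` and `w(i)` is a left-to-right maximum, or `w(i) < w(j)` and
there is `k < i` with `w(k) > w(j)`. -/
def mix (w : List ℕ) : ℕ :=
  ((Finset.range w.length ×ˢ Finset.range w.length).filter fun p =>
    p.1 < p.2 ∧ ((w.getD p.2 0 < w.getD p.1 0 ∧ IsLRMax w p.1) ∨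
      (w.getD p.1 0 < w.getD p.2 0 ∧ ∃ k ∈ Finset.range p.1, w.getD p.2 0 < w.getD k 0))).card

/-- `das w` counts the positions `i` such that either `w(i) > w(i+1)` and
`w(i)` is a left-to-right maximum, or `w(i) < w(i+1)` and there is `k < i`
with `w(k) > w(i+1)`. -/
def das (w : List ℕ) : ℕ :=
  ((Finset.range (w.length - 1)).filter fun i =>
    (w.getD (i + 1) 0 < w.getD i 0 ∧ IsLRMax w i) ∨
      (w.getD i 0 < w.getD (i + 1) 0 ∧ ∃ k ∈ Finset.range i, w.getD (i + 1) 0 < w.getD k 0)).card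

/-- The values of the left-to-right maxima of a word, listed in increasing
order (which is also their order of occurrence). -/
def lrMaxima : List ℕ → List ℕ
  | [] => []
  | x :: xs => x :: lrMaxima (xs.filter fun a => decide (x < a))
termination_by l => l.length
decreasing_by
  have := xs.length_filter_le (fun a => decide (x < a))
  simp only [List.length_cons, List.length_unattach]
  exact Nat.lt_succ_of_le ((List.length_filter_le _ _).trans (by simp))

/-- `Bset w m` is the list of entries of `w` that are smaller than `m` and lie
to the right of (the first occurrence of) `m` in `w`. -/
def Bset (w : List ℕ) (m : ℕ) : List ℕ :=
  ((w.dropWhile fun a => decide (a ≠ m)).tail).filter fun a => decide (a < m)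

/-- Helper for `psiS`: replace the letters satisfying `P`, in order, by the
letters of the first list. -/
def replaceSub (P : ℕ → Bool) : List ℕ → List ℕ → List ℕ
  | _, [] => []
  | rs, x :: xs =>
    if P x then rs.headD x :: replaceSub P rs.tail xs else x :: replaceSub P rs xs

/-- `psiS S w` is `ψ_S(w)`: the result of reversing, in place, the subword of
`w` consisting of the entries belonging to `S`. -/
def psiS (S : List ℕ) (w : List ℕ) : List ℕ :=
  replaceSub (fun a => decide (a ∈ S)) ((w.filter fun a => decide (a ∈ S)).reverse) w

/-- Helper applying the alternating composition
`ψ_{B₁} ∘ ψ_{B₂ ∩ B₁} ∘ ψ_{B₂} ∘ ⋯ ∘ ψ_{B_{k-1}} ∘ ψ_{B_k ∩ B_{k-1}} ∘ ψ_{B_k}`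
to `w`, given the list `[B_k, B_{k-1}, …, B₁]`. -/
def psiChain : List (List ℕ) → List ℕ → List ℕ
  | [], w => w
  | [B], w => psiS B w
  | B :: B' :: rest, w => psiChain (B' :: rest) (psiS (B.inter B') (psiS B w))

/-- The Brändén–Claesson bijection `ψ`. -/
def psi (w : List ℕ) : List ℕ :=
  psiChain (((lrMaxima w).map (Bset w)).reverse) w

section Aux

def desC : List ℕ → ℕ
  | [] => 0
  | [_] => 0
  | x :: y :: r => (if y < x then 1 else 0) + desC (y :: r)

def invC : List ℕ → ℕ
  | [] => 0
  | x :: xs => xs.countP (fun a => decide (a < x)) + invC xs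


theorem des_eq_desC : ∀ w, des w = desC w := by
  intro w
  induction w with
  | nil => rfl
  | cons x xs ih =>
    cases xs with
    | nil => rfl
    | cons y r =>
      rw [des] at ih ⊢
      rw [Finset.card_filter] at ih ⊢
      simp only [List.length_cons, Nat.add_sub_cancel] at ih ⊢
      rw [Finset.sum_range_succ']
      simp only [List.getD_cons_succ, List.getD_cons_zero]
      rw [desC, ← ih, Nat.add_comm]
      simp only [List.getD_cons_succ]

theorem countP_eq_sum (l : List ℕ) (p : ℕ → Bool) :
    l.countP p = ∑ j ∈ Finset.range l.length, if p (l.getD j 0) then 1 else 0 := by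
  induction l with
  | nil => rfl
  | cons x xs ih =>
    rw [List.countP_cons, List.length_cons, Finset.sum_range_succ']
    simp only [List.getD_cons_succ, List.getD_cons_zero, ih]

theorem inv_eq_invC : ∀ w, inv w = invC w := by
  intro w
  induction w with
  | nil => rfl
  | cons x xs ih =>
    rw [inv, Finset.card_filter, Finset.sum_product] at ih ⊢
    simp only [List.length_cons]
    rw [Finset.sum_range_succ']
    have h1 : (∑ j ∈ Finset.range (xs.length + 1),
        if (0:ℕ) < j ∧ (x :: xs).getD j 0 < (x :: xs).getD 0 0 then 1 else 0)
        = xs.countP (fun a => decide (a < x)) := by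
      rw [Finset.sum_range_succ']
      simp only [List.getD_cons_succ, List.getD_cons_zero, Nat.lt_irrefl, false_and, if_false,
        Nat.add_zero, Nat.succ_pos, true_and, countP_eq_sum]
      apply Finset.sum_congr rfl
      intro j _
      rcases h : decide (xs.getD j 0 < x) <;> simp_all
    have h2 : (∑ i ∈ Finset.range xs.length, ∑ j ∈ Finset.range (xs.length + 1),
        if (i+1) < j ∧ (x :: xs).getD j 0 < (x :: xs).getD (i+1) 0 then 1 else 0)
        = invC xs := by
      rw [← ih]
      apply Finset.sum_congr rfl
      intro i _
      rw [Finset.sum_range_succ']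
      simp only [List.getD_cons_succ]
      have h3 : (if (i + 1 < 0 ∧ (x::xs).getD 0 0 < xs.getD i 0) then 1 else 0) = 0 := by
        simp
      rw [h3, Nat.add_zero]
      apply Finset.sum_congr rfl
      intro j _
      congr 2
      simp [Nat.succ_lt_succ_iff]
    rw [invC, h1, h2]
    omega


theorem desC_cons (x : ℕ) (l : List ℕ) (hl : l ≠ []) :
    desC (x :: l) = (if l.headD 0 < x then 1 else 0) + desC l := by
  cases l with
  | nil => simp at hl
  | cons y r => rfl

theorem desC_append (u v : List ℕ) (hu : u ≠ []) (hv : v ≠ []) :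
    desC (u ++ v) = desC u + desC v + (if v.headD 0 < u.getLast hu then 1 else 0) := by
  induction u with
  | nil => simp at hu
  | cons a u ih =>
    cases u with
    | nil =>
      cases v with
      | nil => simp at hv
      | cons b w => simp [desC, desC_cons]; omega
    | cons c u' =>
      have h1 : (c :: u') ≠ [] := by simp
      rw [List.cons_append, desC_cons _ _ (by simp), ih h1, desC_cons a _ h1]
      simp only [List.cons_append, List.headD_cons, List.getLast_cons h1]
      show (if c < a then 1 else 0) + (desC (c :: u') + desC v + if v.headD 0 < (c :: u').getLast h1 then 1 else 0) = (if c < a then 1 else 0) + desC (c :: u') + desC v + if v.headD 0 < (c :: u').getLast h1 then 1 else 0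
      split_ifs <;> omega

-- foldr min facts
theorem foldr_min_le : ∀ (xs : List ℕ) (x : ℕ), ∀ a ∈ x :: xs, xs.foldr min x ≤ a := by
  intro xs
  induction xs with
  | nil => simp
  | cons y ys ih =>
    intro x a ha
    simp only [List.foldr_cons]
    rcases List.mem_cons.mp ha with h | h
    · subst h
      calc min y (ys.foldr min a) ≤ ys.foldr min a := min_le_right _ _
        _ ≤ a := ih a a (by simp)
    · rcases List.mem_cons.mp h with h | h
      · subst h; exact min_le_left _ _
      · calc min y (ys.foldr min x) ≤ ys.foldr min x := min_le_right _ _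
          _ ≤ a := ih x a (by simp [h])

theorem foldr_min_mem : ∀ (xs : List ℕ) (x : ℕ), xs.foldr min x ∈ x :: xs := by
  intro xs
  induction xs with
  | nil => simp
  | cons y ys ih =>
    intro x
    simp only [List.foldr_cons]
    rcases min_cases y (ys.foldr min x) with ⟨h, _⟩ | ⟨h, _⟩
    · rw [h]; simp
    · rw [h]
      rcases List.mem_cons.mp (ih x) with h' | h'
      · rw [h']; simp
      · simp [h']

theorem foldr_min_eq (x : ℕ) (xs : List ℕ) (m : ℕ) (hmem : m ∈ x :: xs)
    (hle : ∀ a ∈ x :: xs, m ≤ a) : xs.foldr min x = m := by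
  exact le_antisymm (foldr_min_le xs x m hmem) (hle _ (foldr_min_mem xs x))

theorem takeWhile_middle (u v : List ℕ) (m : ℕ) (hu : ∀ a ∈ u, m < a) :
    (u ++ m :: v).takeWhile (fun a => decide (a ≠ m)) = u := by
  induction u with
  | nil => simp [List.takeWhile_cons]
  | cons a u ih =>
    have ha : m < a := hu a (by simp)
    simp only [List.cons_append, List.takeWhile_cons]
    have : (decide (a ≠ m)) = true := by simp; omega
    rw [this]
    simp only [if_true]
    rw [ih (fun b hb => hu b (by simp [hb]))]

theorem dropWhile_middle (u v : List ℕ) (m : ℕ) (hu : ∀ a ∈ u, m < a) :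
    (u ++ m :: v).dropWhile (fun a => decide (a ≠ m)) = m :: v := by
  induction u with
  | nil => simp [List.dropWhile_cons]
  | cons a u ih =>
    have ha : m < a := hu a (by simp)
    simp only [List.cons_append, List.dropWhile_cons]
    have : (decide (a ≠ m)) = true := by simp; omega
    rw [this]
    simp only [if_true]
    exact ih (fun b hb => hu b (by simp [hb]))

theorem foldr_min_middle (u v : List ℕ) (m : ℕ) (hu : ∀ a ∈ u, m < a)
    (hv : ∀ a ∈ v, m < a) (x : ℕ) (xs : List ℕ) (hx : x :: xs = u ++ m :: v) :
    xs.foldr min x = m := by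
  apply foldr_min_eq
  · rw [hx]; simp
  · intro a ha
    rw [hx] at ha
    rcases List.mem_append.mp ha with h | h
    · exact le_of_lt (hu a h)
    · rcases List.mem_cons.mp h with h | h
      · omega
      · exact le_of_lt (hv a h)

theorem aix_decomp (u v : List ℕ) (m : ℕ) (hu : ∀ a ∈ u, m < a) (hv : ∀ a ∈ v, m < a) :
    aix (u ++ m :: v) = if u = [] then 1 + aix v else if v = [] then 0 else aix u := by
  rcases hx : u ++ m :: v with _ | ⟨x, xs⟩
  · simp at hx
  · have hm : xs.foldr min x = m := foldr_min_middle u v m hu hv x xs hx.symm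
    rw [aix]
    rw [← hx, hm, takeWhile_middle u v m hu, dropWhile_middle u v m hu]
    simp only [List.tail_cons]
    rfl

def pixList : List ℕ → List ℕ
  | [] => []
  | x :: xs =>
    if (x :: xs).takeWhile (fun a => decide (a ≠ xs.foldr min x)) = [] then
      xs.foldr min x :: pixList (((x :: xs).dropWhile (fun a => decide (a ≠ xs.foldr min x))).tail)
    else if ((x :: xs).dropWhile (fun a => decide (a ≠ xs.foldr min x))).tail = [] then []
    else pixList ((x :: xs).takeWhile (fun a => decide (a ≠ xs.foldr min x)))
termination_by w => w.length
decreasing_by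
  · have h1 := (List.dropWhile_sublist (l := x :: xs) (fun a => decide (a ≠ xs.foldr min x))).length_le
    have h2 := List.length_tail (l := (x :: xs).dropWhile (fun a => decide (a ≠ xs.foldr min x)))
    simp only [List.length_cons, List.foldr_attach] at *
    omega
  · rename_i hα hβ
    simp only [List.foldr_attach] at *
    have h0 : ((x :: xs).takeWhile (fun a => decide (a ≠ xs.foldr min x))) ++
        ((x :: xs).dropWhile (fun a => decide (a ≠ xs.foldr min x))) = x :: xs :=
      List.takeWhile_append_dropWhile ..
    have h1 : ((x :: xs).dropWhile (fun a => decide (a ≠ xs.foldr min x))) ≠ [] := by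
      intro h; apply hβ; rw [h]; rfl
    have h2 := congrArg List.length h0
    simp only [List.length_append, List.length_cons] at h2
    have h3 : 0 < ((x :: xs).dropWhile (fun a => decide (a ≠ xs.foldr min x))).length :=
      List.length_pos_iff.mpr h1
    simp only [List.length_cons]
    omega

theorem pixList_decomp (u v : List ℕ) (m : ℕ) (hu : ∀ a ∈ u, m < a) (hv : ∀ a ∈ v, m < a) :
    pixList (u ++ m :: v) = if u = [] then m :: pixList v else if v = [] then [] else pixList u := by
  rcases hx : u ++ m :: v with _ | ⟨x, xs⟩
  · simp at hx
  · have hm : xs.foldr min x = m := foldr_min_middle u v m hu hv x xs hx.symm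
    rw [pixList]
    rw [← hx, hm, takeWhile_middle u v m hu, dropWhile_middle u v m hu]
    simp only [List.tail_cons]
    rfl

theorem fkt_decomp (k : ℕ) (u v : List ℕ) (m : ℕ) (hu : ∀ a ∈ u, m < a) (hv : ∀ a ∈ v, m < a) :
    fkt k (u ++ m :: v) = if k < m then k :: (u ++ m :: v) else if u = [] then fkt k v ++ [m]
      else if v = [] then k :: m :: u else fkt k u ++ m :: v := by
  rcases hx : u ++ m :: v with _ | ⟨x, xs⟩
  · simp at hx
  · have hm : xs.foldr min x = m := foldr_min_middle u v m hu hv x xs hx.symm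
    rw [fkt]
    rw [← hx, hm, takeWhile_middle u v m hu, dropWhile_middle u v m hu]
    simp only [List.tail_cons]
    rfl

theorem exists_min_decomp (l : List ℕ) (hne : l ≠ []) (hnd : l.Nodup) :
    ∃ u m v, l = u ++ m :: v ∧ (∀ a ∈ u, m < a) ∧ (∀ a ∈ v, m < a) := by
  rcases l with _ | ⟨x, xs⟩
  · simp at hne
  · set m := xs.foldr min x with hm
    have hmem : m ∈ x :: xs := foldr_min_mem xs x
    have hle : ∀ a ∈ x :: xs, m ≤ a := foldr_min_le xs x
    obtain ⟨u, v, huv⟩ := List.append_of_mem hmem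
    refine ⟨u, m, v, huv, ?_, ?_⟩
    · intro a ha
      have h1 : a ∈ x :: xs := by rw [huv]; simp [ha]
      have h2 : a ≠ m := by
        intro h
        subst h
        rw [huv] at hnd
        rcases List.nodup_append.mp hnd with ⟨_, _, hdisj⟩
        exact hdisj _ ha _ (by simp) rfl
      have := hle a h1
      omega
    · intro a ha
      have h1 : a ∈ x :: xs := by rw [huv]; simp [ha]
      have h2 : a ≠ m := by
        intro h
        subst h
        rw [huv] at hnd
        have := (List.nodup_append.mp hnd).2.1
        rw [List.nodup_cons] at this
        exact this.1 ha
      have := hle a h1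
      omega

theorem nodup_decomp_left {u v : List ℕ} {m : ℕ} (h : (u ++ m :: v).Nodup) : u.Nodup :=
  (List.nodup_append.mp h).1

theorem nodup_decomp_right {u v : List ℕ} {m : ℕ} (h : (u ++ m :: v).Nodup) : v.Nodup :=
  ((List.nodup_cons.mp (List.nodup_append.mp h).2.1)).2

theorem pixList_facts : ∀ n, ∀ l : List ℕ, l.length ≤ n → l.Nodup →
    (∀ a ∈ pixList l, a ∈ l) ∧ (∀ a ∈ pixList l, (pixList l).headD 0 ≤ a) ∧
      aix l = (pixList l).length := by
  intro n
  induction n with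
  | zero =>
    intro l hl _
    have : l = [] := List.eq_nil_of_length_eq_zero (Nat.le_zero.mp hl)
    subst this
    refine ⟨by simp [pixList], by simp [pixList], by simp [aix, pixList]⟩
  | succ n ih =>
    intro l hl hnd
    rcases eq_or_ne l [] with rfl | hne
    · refine ⟨by simp [pixList], by simp [pixList], by simp [aix, pixList]⟩
    obtain ⟨u, m, v, rfl, hu, hv⟩ := exists_min_decomp l hne hnd
    have hlen := congrArg List.length (rfl : u ++ m :: v = u ++ m :: v)
    have hlu : u.length ≤ n := by
      have := List.length_append (as := u) (bs := m :: v)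
      simp only [List.length_cons] at this hl
      omega
    have hlv : v.length ≤ n := by
      have := List.length_append (as := u) (bs := m :: v)
      simp only [List.length_cons] at this hl
      omega
    have hua := ih u hlu (nodup_decomp_left hnd)
    have hva := ih v hlv (nodup_decomp_right hnd)
    rw [pixList_decomp u v m hu hv, aix_decomp u v m hu hv]
    split_ifs with h1 h2
    · subst h1
      refine ⟨?_, ?_, ?_⟩
      · intro a ha
        rcases List.mem_cons.mp ha with rfl | ha
        · simp
        · have := hva.1 a ha
          simp [this]
      · intro a ha
        rcases List.mem_cons.mp ha with rfl | ha
        · simp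
        · have := hva.1 a ha
          have := hv a this
          simp only [List.headD_cons]
          omega
      · simp only [List.length_cons, hva.2.2]
        omega
    · exact ⟨by simp, by simp, by simp⟩
    · refine ⟨?_, hua.2.1, hua.2.2⟩
      intro a ha
      have := hua.1 a ha
      simp [this]

theorem headD_mem {l : List ℕ} (h : l ≠ []) : l.headD 0 ∈ l := by
  cases l with
  | nil => simp at h
  | cons x xs => simp

theorem desC_cons_min {m : ℕ} {v : List ℕ} (hv : ∀ a ∈ v, m < a) : desC (m :: v) = desC v := by
  cases v with
  | nil => rfl
  | cons x xs =>
    rw [desC_cons m _ (by simp)]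
    have := hv x (by simp)
    rw [List.headD_cons]
    rw [if_neg (by omega)]
    omega

theorem pixList_nil : pixList [] = [] := by simp [pixList]
theorem aix_nil : aix [] = 0 := by simp [aix]
theorem fkt_nil (k : ℕ) : fkt k [] = [k] := by simp [fkt]

theorem fkt_spec : ∀ n, ∀ τ : List ℕ, τ.length ≤ n → τ.Nodup → ∀ k, k ∉ τ →
    (fkt k τ).Perm (k :: τ) ∧
    ((pixList τ = [] ∨ k < (pixList τ).headD 0) →
      pixList (fkt k τ) = k :: pixList τ ∧ desC (fkt k τ) = desC τ) ∧
    ((pixList τ ≠ [] ∧ (pixList τ).headD 0 < k) →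
      pixList (fkt k τ) = [] ∧
        desC (fkt k τ) = desC τ + (pixList τ).countP (fun a => decide (a < k))) := by
  intro n
  induction n with
  | zero =>
    intro τ hl _ k _
    have : τ = [] := List.eq_nil_of_length_eq_zero (Nat.le_zero.mp hl)
    subst this
    refine ⟨by rw [fkt_nil], ?_, ?_⟩
    · intro _
      rw [fkt_nil, pixList_nil]
      constructor
      · have := pixList_decomp [] [] k (by simp) (by simp)
        simpa [pixList_nil] using this
      · rfl
    · intro h
      rw [pixList_nil] at h
      simp at h
  | succ n ih =>
    intro τ hlen hnd k hk
    rcases eq_or_ne τ [] with rfl | hne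
    · refine ⟨by rw [fkt_nil], ?_, ?_⟩
      · intro _
        rw [fkt_nil, pixList_nil]
        constructor
        · have := pixList_decomp [] [] k (by simp) (by simp)
          simpa [pixList_nil] using this
        · rfl
      · intro h
        rw [pixList_nil] at h
        simp at h
    obtain ⟨u, m, v, rfl, hu, hv⟩ := exists_min_decomp τ hne hnd
    have hmτ : ∀ a ∈ u ++ m :: v, m ≤ a := by
      intro a ha
      rcases List.mem_append.mp ha with h | h
      · exact le_of_lt (hu a h)
      · rcases List.mem_cons.mp h with rfl | h
        · exact le_rfl
        · exact le_of_lt (hv a h)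
    have hkm : k ≠ m := by
      intro h; subst h; exact hk (by simp)
    have hku : k ∉ u := fun h => hk (by simp [h])
    have hkv : k ∉ v := fun h => hk (by simp [h])
    have hlu : u.length ≤ n := by
      have := List.length_append (as := u) (bs := m :: v)
      simp only [List.length_cons] at this hlen
      omega
    have hlv : v.length ≤ n := by
      have := List.length_append (as := u) (bs := m :: v)
      simp only [List.length_cons] at this hlen
      omega
    have hndu : u.Nodup := nodup_decomp_left hnd
    have hndv : v.Nodup := nodup_decomp_right hnd
    have hPsub := (pixList_facts (n+1) _ hlen hnd).1
    have hP := pixList_decomp u v m hu hv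
    rw [fkt_decomp k u v m hu hv]
    rcases Nat.lt_or_ge k m with hlt | hge
    · -- k < m
      rw [if_pos hlt]
      have hvk : ∀ a ∈ u ++ m :: v, k < a := fun a ha => lt_of_lt_of_le hlt (hmτ a ha)
      have hP2 : pixList (k :: (u ++ m :: v)) = k :: pixList (u ++ m :: v) := by
        have := pixList_decomp [] (u ++ m :: v) k (by simp) hvk
        simpa using this
      refine ⟨List.Perm.refl _, ?_, ?_⟩
      · intro _
        refine ⟨hP2, ?_⟩
        have hh : (u ++ m :: v).headD 0 ∈ u ++ m :: v := headD_mem hne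
        have : desC (k :: (u ++ m :: v)) = desC (u ++ m :: v) := desC_cons_min hvk
        exact this
      · intro ⟨h1, h2⟩
        exfalso
        have hh : (pixList (u ++ m :: v)).headD 0 ∈ u ++ m :: v := hPsub _ (headD_mem h1)
        have := hmτ _ hh
        omega
    · -- k > m
      have hmk : m < k := by omega
      rw [if_neg (by omega)]
      rcases eq_or_ne u [] with rfl | hune
      · -- u = []
        rw [if_pos rfl]
        simp only [List.nil_append] at *
        have ihv := ih v hlv hndv k hkv
        have hperm : (fkt k v).Perm (k :: v) := ihv.1
        have hfne : fkt k v ≠ [] := by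
          intro h
          have := hperm.length_eq
          rw [h] at this
          simp at this
        have hfgt : ∀ a ∈ fkt k v, m < a := by
          intro a ha
          have := hperm.mem_iff.mp ha
          rcases List.mem_cons.mp this with rfl | h
          · exact hmk
          · exact hv a h
        have hPr : pixList (fkt k v ++ [m]) = [] := by
          have := pixList_decomp (fkt k v) [] m hfgt (by simp)
          rw [if_neg hfne, if_pos rfl] at this
          exact this
        have hglm : m < (fkt k v).getLast hfne := hfgt _ (List.getLast_mem hfne)
        have hdr : desC (fkt k v ++ [m]) = desC (fkt k v) + 1 := by
          rw [desC_append (fkt k v) [m] hfne (by simp)]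
          rw [List.headD_cons]
          rw [if_pos hglm]
          rfl
        have hPm : pixList (m :: v) = m :: pixList v := by simpa using hP
        have hdm : desC (m :: v) = desC v := desC_cons_min hv
        refine ⟨?_, ?_, ?_⟩
        · exact ((List.perm_append_singleton m _).trans
            ((hperm.cons m).trans (List.Perm.swap k m v)))
        · intro hA
          exfalso
          rw [hPm] at hA
          simp only [List.headD_cons] at hA
          rcases hA with h | h
          · simp at h
          · omega
        · intro _
          refine ⟨hPr, ?_⟩
          rw [hdr, hPm, hdm, List.countP_cons]
          simp only [decide_eq_true_eq]
          rw [if_pos hmk]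
          have hsubv := (pixList_facts n v hlv hndv).1
          have hheadv := (pixList_facts n v hlv hndv).2.1
          rcases eq_or_ne (pixList v) [] with hpv | hpv
          · rw [ihv.2.1 (Or.inl hpv)|>.2, hpv]
            simp
          · rcases Nat.lt_or_ge k ((pixList v).headD 0) with hc | hc
            · rw [ihv.2.1 (Or.inr hc)|>.2]
              have : (pixList v).countP (fun a => decide (a < k)) = 0 := by
                apply List.countP_eq_zero.mpr
                intro a ha
                have := hheadv a ha
                simp only [decide_eq_true_eq]
                omega
              omega
            · have hc' : (pixList v).headD 0 < k := by
                have hh := hsubv _ (headD_mem hpv)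
                have : (pixList v).headD 0 ≠ k := by
                  intro h; exact hkv (h ▸ hh)
                omega
              rw [(ihv.2.2 ⟨hpv, hc'⟩).2]
              omega
      · rw [if_neg hune]
        rcases eq_or_ne v [] with rfl | hvne
        · -- v = []
          rw [if_pos rfl]
          have hP0 : pixList (u ++ [m]) = [] := by
            have := pixList_decomp u [] m hu (by simp)
            rw [if_neg hune, if_pos rfl] at this
            exact this
          have hPr : pixList (k :: m :: u) = [k] := by
            have h1 : ∀ a ∈ [k], m < a := by simpa using hmk
            have := pixList_decomp [k] u m h1 hu
            rw [if_neg (by simp), if_neg hune] at this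
            have h2 : pixList [k] = [k] := by
              have := pixList_decomp [] [] k (by simp) (by simp)
              simpa [pixList_nil] using this
            simpa [h2] using this
          have hglm : m < u.getLast hune := hu _ (List.getLast_mem hune)
          have hdτ : desC (u ++ [m]) = desC u + 1 := by
            rw [desC_append u [m] hune (by simp)]
            rw [List.headD_cons]
            rw [if_pos hglm]
            rfl
          have hdr : desC (k :: m :: u) = desC u + 1 := by
            have h1 : desC ([k] ++ m :: u) = desC [k] + desC (m :: u) + 1 := by
              rw [desC_append [k] (m :: u) (by simp) (by simp)]
              rw [List.headD_cons, List.getLast_singleton]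
              rw [if_pos hmk]
            have h2 : desC (m :: u) = desC u := desC_cons_min hu
            simpa [h2, desC] using h1
          refine ⟨?_, ?_, ?_⟩
          · exact ((List.perm_append_singleton m u).symm.cons k)
          · intro _
            rw [hP0, hPr, hdτ, hdr]
            exact ⟨rfl, rfl⟩
          · intro hB
            rw [hP0] at hB
            simp at hB
        · -- u ≠ [], v ≠ []
          rw [if_neg hvne]
          have ihu := ih u hlu hndu k hku
          have hperm : (fkt k u).Perm (k :: u) := ihu.1
          have hfne : fkt k u ≠ [] := by
            intro h
            have := hperm.length_eq
            rw [h] at this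
            simp at this
          have hfgt : ∀ a ∈ fkt k u, m < a := by
            intro a ha
            have := hperm.mem_iff.mp ha
            rcases List.mem_cons.mp this with rfl | h
            · exact hmk
            · exact hu a h
          have hPr : pixList (fkt k u ++ m :: v) = pixList (fkt k u) := by
            have := pixList_decomp (fkt k u) v m hfgt hv
            rw [if_neg hfne, if_neg hvne] at this
            exact this
          have hPτ : pixList (u ++ m :: v) = pixList u := by
            rw [hP, if_neg hune, if_neg hvne]
          have hglr : m < (fkt k u).getLast hfne := hfgt _ (List.getLast_mem hfne)
          have hglu : m < u.getLast hune := hu _ (List.getLast_mem hune)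
          have hdr : desC (fkt k u ++ m :: v) = desC (fkt k u) + desC (m :: v) + 1 := by
            rw [desC_append (fkt k u) (m :: v) hfne (by simp)]
            rw [List.headD_cons]
            rw [if_pos hglr]
          have hdτ : desC (u ++ m :: v) = desC u + desC (m :: v) + 1 := by
            rw [desC_append u (m :: v) hune (by simp)]
            rw [List.headD_cons]
            rw [if_pos hglu]
          refine ⟨?_, ?_, ?_⟩
          · exact hperm.append_right (m :: v)
          · intro hA
            rw [hPτ] at hA
            obtain ⟨h1, h2⟩ := ihu.2.1 hA
            rw [hPr, hPτ, hdr, hdτ, h1, h2]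
            exact ⟨rfl, rfl⟩
          · intro hB
            rw [hPτ] at hB
            obtain ⟨h1, h2⟩ := ihu.2.2 hB
            rw [hPr, hPτ, hdr, hdτ, h1, h2]
            exact ⟨rfl, by omega⟩

theorem decRun_eq : ∀ (d : List ℕ) (hd : d ≠ []) (s : List ℕ),
    List.Chain' (fun x y => y ≤ x) d →
    (∀ _ : s ≠ [], ¬ (s.headD 0 ≤ d.getLast hd)) → decRun (d ++ s) = (d, s) := by
  intro d
  induction d with
  | nil => intro hd; simp at hd
  | cons x c ihd =>
    intro _ s hchain hlast
    cases c with
    | nil =>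
      cases s with
      | nil => simp [decRun]
      | cons y s' =>
        have hy : ¬ (y ≤ x) := by
          have := hlast (by simp)
          simpa using this
        simp only [List.cons_append, List.nil_append]
        rw [decRun, if_neg hy]
    | cons c' d' =>
      have hcx : c' ≤ x := (List.isChain_cons_cons.mp hchain).1
      have hih := ihd (by simp) s (List.isChain_cons_cons.mp hchain).2
        (by
          intro hs
          have := hlast hs
          rwa [List.getLast_cons (by simp)] at this)
      simp only [List.cons_append]
      rw [decRun]
      simp only [List.cons_append] at hih
      rw [if_pos hcx, hih]

theorem hookRev_nil : hookRev [] = ([], []) := by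
  rw [hookRev]
  simp [decRun]

theorem hookRev_of_decRun_nil (r : List ℕ) (h : (decRun r).2 = []) :
    hookRev r = (r.reverse, []) := by
  rw [hookRev]
  split
  · rfl
  · next z rest heq =>
    rw [h] at heq
    simp at heq

theorem hookRev_of_decRun_cons (r : List ℕ) (z : ℕ) (rest : List ℕ)
    (h : (decRun r).2 = z :: rest) :
    hookRev r = ((hookRev rest).1, (hookRev rest).2 ++ [z :: (decRun r).1.reverse]) := by
  rw [hookRev]
  split
  · next heq =>
    rw [h] at heq
    simp at heq
  · next z' rest' heq =>
    rw [h] at heq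
    obtain ⟨rfl, rfl⟩ : z = z' ∧ rest = rest' := by
      constructor <;> injection heq <;> simp_all
    rfl

theorem hookRev_spec : ∀ (hs : List (List ℕ)) (p : List ℕ), List.Chain' (· ≤ ·) p →
    (∀ h ∈ hs, IsHook h) → hookRev ((p ++ hs.flatten).reverse) = (p, hs) := by
  intro hs
  induction hs using List.reverseRecOn with
  | nil =>
    intro p hp _
    simp only [List.flatten_nil, List.append_nil]
    rcases eq_or_ne p [] with rfl | hne
    · simpa using hookRev_nil
    · have hd : decRun p.reverse = (p.reverse, []) := by
        have := decRun_eq p.reverse (by simpa using hne) [] ?_ (by simp)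
        · simpa using this
        · rw [List.Chain', List.isChain_reverse]
          exact hp
      rw [hookRev_of_decRun_nil _ (by rw [hd])]
      simp
  | append_singleton hs' h ih =>
    intro p hp hhooks
    obtain ⟨a, b, rest, hh, hba, hchain⟩ := hhooks h (by simp)
    subst hh
    have hrw : (p ++ (hs' ++ [a :: b :: rest]).flatten).reverse
        = (b :: rest).reverse ++ a :: (p ++ hs'.flatten).reverse := by
      simp
    have hd : decRun ((b :: rest).reverse ++ a :: (p ++ hs'.flatten).reverse)
        = ((b :: rest).reverse, a :: (p ++ hs'.flatten).reverse) :=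
      decRun_eq _ (by simp) _
        (by rw [List.Chain', List.isChain_reverse]; exact hchain)
        (by
          intro _
          simp only [List.headD_cons]
          rw [List.getLast_reverse]
          simp only [List.head_cons]
          omega)
    rw [hrw, hookRev_of_decRun_cons _ a ((p ++ hs'.flatten).reverse) (by rw [hd]),
      ih p hp (fun h hh => hhooks h (by simp [hh]))]
    rw [hd]
    simp

theorem invC_eq_zero {l : List ℕ} (h : List.Chain' (· ≤ ·) l) : invC l = 0 := by
  have hp : List.Pairwise (· ≤ ·) l := List.isChain_iff_pairwise.mp h
  induction l with
  | nil => rfl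
  | cons x xs ih =>
    rw [invC]
    rw [List.pairwise_cons] at hp
    have h1 : xs.countP (fun a => decide (a < x)) = 0 := by
      apply List.countP_eq_zero.mpr
      intro a ha
      have := hp.1 a ha
      simp only [decide_eq_true_eq]
      omega
    rw [h1, ih (List.isChain_iff_pairwise.mpr hp.2) hp.2]

theorem main_aux : ∀ w : List ℕ, w.Nodup → ∃ p hs,
    hookSplit w = (p, hs) ∧ w = p ++ hs.flatten ∧ List.Chain' (· ≤ ·) p ∧ (∀ h ∈ hs, IsHook h) ∧
    (phiW w).Perm w ∧ pixList (phiW w) = p ∧ desC (phiW w) = (hs.map inv).sum := by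
  intro w
  induction w with
  | nil =>
    intro _
    refine ⟨[], [], ?_, by simp, by simp [List.Chain'], by simp, by simp [phiW], by simp [phiW, pixList_nil],
      by simp [phiW, desC]⟩
    unfold hookSplit
    simpa using hookRev_nil
  | cons k w ihw =>
    intro hnd
    obtain ⟨hkw, hwnd⟩ := List.nodup_cons.mp hnd
    obtain ⟨p, hs, hsplit, hjoin, hchain, hhooks, hperm, hpix, hdes⟩ := ihw hwnd
    have hphi : phiW (k :: w) = fkt k (phiW w) := rfl
    set τ := phiW w with hτ
    have hτnd : τ.Nodup := hperm.nodup_iff.mpr hwnd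
    have hkτ : k ∉ τ := fun h => hkw (hperm.mem_iff.mp h)
    have spec := fkt_spec τ.length τ le_rfl hτnd k hkτ
    have hpsub : ∀ a ∈ p, a ∈ w := by
      intro a ha
      rw [hjoin]
      simp [ha]
    rcases eq_or_ne p [] with rfl | hpne
    · -- case A with p = []
      obtain ⟨h1, h2⟩ := spec.2.1 (by rw [hpix]; exact Or.inl rfl)
      refine ⟨[k], hs, ?_, by simpa using hjoin, by simp [List.Chain'], hhooks,
        by rw [hphi]; exact spec.1.trans (hperm.cons k), ?_, ?_⟩
      · show hookRev (k :: w).reverse = ([k], hs)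
        have := hookRev_spec hs [k] (by simp [List.Chain']) hhooks
        rw [hjoin]
        simpa using this
      · rw [hphi, h1, hpix]
      · rw [hphi, h2, hdes]
    · rcases hpe : p with _ | ⟨ph, pt⟩
      · exact absurd hpe hpne
      have hph_mem : p.headD 0 ∈ p := headD_mem hpne
      have hkph : k ≠ p.headD 0 := fun h => hkw (h ▸ hpsub _ hph_mem)
      rcases Nat.lt_or_ge k (p.headD 0) with hlt | hge
      · -- case A
        obtain ⟨h1, h2⟩ := spec.2.1 (by rw [hpix]; exact Or.inr hlt)
        have hchain' : List.Chain' (· ≤ ·) (k :: p) := by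
          rw [hpe]
          rw [hpe] at hchain
          apply List.isChain_cons_cons.mpr
          refine ⟨?_, hchain⟩
          rw [hpe] at hlt
          simpa using le_of_lt hlt
        refine ⟨k :: p, hs, ?_, by simpa using hjoin, hchain', hhooks,
          by rw [hphi]; exact spec.1.trans (hperm.cons k), ?_, ?_⟩
        · show hookRev (k :: w).reverse = (k :: p, hs)
          have := hookRev_spec hs (k :: p) hchain' hhooks
          rw [hjoin]
          simpa using this
        · rw [hphi, h1, hpix]
        · rw [hphi, h2, hdes]
      · -- case B
        have hgt : p.headD 0 < k := by omega
        obtain ⟨h1, h2⟩ := spec.2.2 (by rw [hpix]; exact ⟨hpne, hgt⟩)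
        have hhook : IsHook (k :: p) := by
          refine ⟨k, ph, pt, by rw [hpe], ?_, ?_⟩
          · rw [hpe] at hgt; simpa using hgt
          · rw [hpe] at hchain; exact hchain
        have hhooks' : ∀ h ∈ (k :: p) :: hs, IsHook h := by
          intro h hh
          rcases List.mem_cons.mp hh with rfl | hh
          · exact hhook
          · exact hhooks h hh
        have hinv : inv (k :: p) = p.countP (fun a => decide (a < k)) := by
          rw [inv_eq_invC, invC, invC_eq_zero hchain]
          omega
        refine ⟨[], (k :: p) :: hs, ?_, by simp [hjoin], by simp [List.Chain'], hhooks',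
          by rw [hphi]; exact spec.1.trans (hperm.cons k), ?_, ?_⟩
        · show hookRev (k :: w).reverse = ([], (k :: p) :: hs)
          have := hookRev_spec ((k :: p) :: hs) [] (by simp [List.Chain']) hhooks'
          rw [hjoin]
          simpa using this
        · rw [hphi, h1]
        · rw [hphi, h2, hdes, List.map_cons, List.sum_cons, hinv, hpix]
          omega


end Aux

/-- For every permutation `π ∈ S_n`, `aix φ(π) = pix π` and
`des φ(π) = lec π`. -/
theorem aix_des_phi (n : ℕ) (π : Equiv.Perm (Fin n)) :
    aix (phiW (permList π)) = pix (permList π) ∧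
    des (phiW (permList π)) = lec (permList π) := by
  have hnd : (permList π).Nodup := by
    rw [permList]
    apply List.nodup_ofFn.mpr
    intro i j h
    simp only [Nat.add_right_cancel_iff, Nat.cast_inj] at h
    exact π.injective (Fin.ext (by omega))
  obtain ⟨p, hs, hsplit, hjoin, hchain, hhooks, hperm, hpix, hdes⟩ := main_aux _ hnd
  have hphind : (phiW (permList π)).Nodup := hperm.nodup_iff.mpr hnd
  constructor
  · rw [(pixList_facts (phiW (permList π)).length _ le_rfl hphind).2.2, hpix, pix, hsplit]
  · rw [des_eq_desC, hdes, lec, hsplit]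


end PaperStats
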